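/- If A is a dense subring of B and P, Q are prime ideals of B with P ∩ A ⊆ Q ∩ A, then P ⊆ Q. -/
import Mathlib


def IsDenseSubring {B : Type*} [CommRing B] (A : Subring B) : Prop :=
  ∀ I : Ideal B, ∀ b ∉ I.radical, ∃ a ∉ I.radical, a * b ∈ A

theorem stmt_7 {B : Type*} [CommRing B] (A : Subring B) (hA : IsDenseSubring A)
    (P Q : Ideal B) (hP : P.IsPrime) (hQ : Q.IsPrime)
    (h : P.comap A.subtype ≤ Q.comap A.subtype) : P ≤ Q := by
  intro b hbP
  by_contra hbQ
  have hbrad : b ∉ Q.radical := by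
    rw [hQ.radical]; exact hbQ
  obtain ⟨a, harad, habA⟩ := hA Q b hbrad
  have habP : (⟨a * b, habA⟩ : A) ∈ P.comap A.subtype := by
    simpa [Ideal.mem_comap] using P.mul_mem_left a hbP
  have habQ : a * b ∈ Q := h habP
  rcases hQ.mem_or_mem habQ with haQ | hbQ'
  · exact harad (by rw [hQ.radical]; exact haQ)
  · exact hbQ hbQ'
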